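/- Let p be an odd prime that is a Wilson prime. Then B_{2p−2} ≡ B_{p−1} (mod p), i.e. the rational number B_{2p−2} − B_{p−1} equals p·(a/b) for some integers a, b with p ∤ b. -/

import Mathlib

open Finset

/-- `x ≡ y (mod p^k)` for rationals: `x - y = p^k * (c/d)` with `p ∤ d`. -/
def ratCongr (p k : ℕ) (x y : ℚ) : Prop :=
  ∃ c d : ℤ, ¬ (p : ℤ) ∣ d ∧ x - y = (p : ℚ) ^ k * ((c : ℚ) / (d : ℚ))

/-- The Wilson quotient `W_p = ((p-1)! + 1)/p` (an integer by Wilson's theorem). -/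
def wilsonQuotient (p : ℕ) : ℤ := ((Nat.factorial (p - 1) : ℤ) + 1) / p

/-- The Fermat quotient `q_p(a) = (a^(p-1) - 1)/p` (an integer for `p ∤ a`). -/
def fermatQuotient (p a : ℕ) : ℤ := ((a : ℤ) ^ (p - 1) - 1) / p

/-- A prime `p` is a Wilson prime if `p ∣ W_p`. -/
def IsWilsonPrime (p : ℕ) : Prop := (p : ℤ) ∣ wilsonQuotient p

/-- A prime `p` is a Lerch prime if `∑_{a=1}^{p-1} q_p(a) ≡ W_p (mod p²)`. -/
def IsLerchPrime (p : ℕ) : Prop :=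
  (p : ℤ) ^ 2 ∣ (∑ a ∈ Icc 1 (p - 1), fermatQuotient p a) - wilsonQuotient p

/-- The harmonic number `H_a = ∑_{k=1}^{a} 1/k`. -/
def harmonicNum (a : ℕ) : ℚ := ∑ k ∈ Icc 1 a, (1 : ℚ) / k

/-- The generalized harmonic number `H_{a,2} = ∑_{k=1}^{a} 1/k²`. -/
def harmonicNum2 (a : ℕ) : ℚ := ∑ k ∈ Icc 1 a, (1 : ℚ) / (k : ℚ) ^ 2

variable {p : ℕ}

/-- p-integral rationals. -/
def PInt (p : ℕ) (x : ℚ) : Prop := ∃ c d : ℤ, ¬ (p:ℤ) ∣ d ∧ x = (c:ℚ)/(d:ℚ)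

lemma PInt.d_ne_zero {d : ℤ} (h : ¬ (p:ℤ) ∣ d) : (d:ℚ) ≠ 0 := by
  intro h0; apply h; simp_all

lemma pint_intCast (c : ℤ) (hp : p ≠ 1) : PInt p (c:ℚ) := by
  refine ⟨c, 1, ?_, by norm_num⟩
  intro h
  have := Int.eq_one_of_dvd_one (by norm_num) h
  exact hp (by exact_mod_cast this)

lemma pint_add (hp : p.Prime) {x y : ℚ} (hx : PInt p x) (hy : PInt p y) : PInt p (x + y) := by
  obtain ⟨c1, d1, h1, rfl⟩ := hx
  obtain ⟨c2, d2, h2, rfl⟩ := hy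
  refine ⟨c1 * d2 + c2 * d1, d1 * d2, ?_, ?_⟩
  · intro h
    rcases (Int.Prime.dvd_mul' (by exact_mod_cast hp) h) with h | h <;> simp_all
  · have := PInt.d_ne_zero (p := p) h1
    have := PInt.d_ne_zero (p := p) h2
    push_cast
    field_simp

lemma pint_mul (hp : p.Prime) {x y : ℚ} (hx : PInt p x) (hy : PInt p y) : PInt p (x * y) := by
  obtain ⟨c1, d1, h1, rfl⟩ := hx
  obtain ⟨c2, d2, h2, rfl⟩ := hy
  refine ⟨c1 * c2, d1 * d2, ?_, ?_⟩
  · intro h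
    rcases (Int.Prime.dvd_mul' (by exact_mod_cast hp) h) with h | h <;> simp_all
  · push_cast; field_simp

lemma pint_neg {x : ℚ} (hx : PInt p x) : PInt p (-x) := by
  obtain ⟨c, d, h, rfl⟩ := hx
  exact ⟨-c, d, h, by push_cast; ring⟩

lemma pint_sum (hp : p.Prime) {s : Finset ℕ} {f : ℕ → ℚ} (h : ∀ i ∈ s, PInt p (f i)) :
    PInt p (∑ i ∈ s, f i) := by
  classical
  induction s using Finset.induction_on with
  | empty => simpa using pint_intCast 0 hp.ne_one
  | @insert a s hns ih =>
    rw [Finset.sum_insert hns]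
    exact pint_add hp (h _ (Finset.mem_insert_self _ _))
      (ih fun i hi => h i (Finset.mem_insert_of_mem hi))

lemma pint_sub (hp : p.Prime) {x y : ℚ} (hx : PInt p x) (hy : PInt p y) : PInt p (x - y) := by
  rw [sub_eq_add_neg]; exact pint_add hp hx (pint_neg hy)

lemma ppow_div_m (hp : p.Prime) (m j : ℕ) (hj : j ≤ m)
    (hm : m ≠ 0) (ht : m.factorization p ≤ m - j) :
    ∃ y : ℚ, PInt p y ∧ (p:ℚ)^m / (m:ℚ) = (p:ℚ)^j * y := by
  set t := m.factorization p with htdef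
  have hdvd : p ^ t ∣ m := Nat.ordProj_dvd m p
  set u := m / p ^ t with hu
  have hmu : m = p ^ t * u := (Nat.div_mul_cancel hdvd).symm.trans (mul_comm _ _)
  have hpu : ¬ p ∣ u := Nat.not_dvd_ordCompl hp hm
  have hp0 : (p:ℚ) ≠ 0 := by exact_mod_cast hp.pos.ne'
  have hun : u ≠ 0 := by intro h0; rw [h0, Nat.mul_zero] at hmu; exact hm hmu
  have hu0 : (u:ℚ) ≠ 0 := by exact_mod_cast hun
  have hmq : (m:ℚ) = (p:ℚ)^t * (u:ℚ) := by exact_mod_cast hmu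
  have hpow : (p:ℚ)^j * (p:ℚ)^(m-j-t) * (p:ℚ)^t = (p:ℚ)^m := by
    rw [← pow_add, ← pow_add]; congr 1; omega
  refine ⟨((p:ℚ)) ^ (m - j - t) / ((u:ℕ):ℚ), ⟨(p:ℤ)^(m-j-t), (u:ℤ), ?_, by push_cast; ring⟩, ?_⟩
  · exact fun h => hpu (by exact_mod_cast h)
  · calc (p:ℚ)^m/(m:ℚ) = ((p:ℚ)^j * (p:ℚ)^(m-j-t) * (p:ℚ)^t)/((p:ℚ)^t * (u:ℚ)) := by
          rw [hpow, hmq]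
      _ = (p:ℚ)^j * ((p:ℚ)^(m-j-t)/(u:ℚ)) := by field_simp

lemma fact_le_one (m : ℕ) (hm : m ≠ 0) : m.factorization p ≤ m - 1 := by
  rcases eq_or_ne p 1 with rfl | hp1
  · simp
  rcases Nat.eq_zero_or_pos p with rfl | hppos
  · simp
  by_cases hp : p.Prime
  · have hdvd : p ^ m.factorization p ∣ m := Nat.ordProj_dvd m p
    have hle : p ^ m.factorization p ≤ m := Nat.le_of_dvd (by omega) hdvd
    have h2 : m.factorization p < 2 ^ m.factorization p := Nat.lt_two_pow_self
    have h3 : 2 ^ m.factorization p ≤ p ^ m.factorization p :=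
      Nat.pow_le_pow_left hp.two_le _
    omega
  · simp [Nat.factorization_eq_zero_of_not_prime m hp]

lemma five_pow_aux : ∀ t : ℕ, 1 ≤ t → t + 3 ≤ 5 ^ t := by
  intro t
  induction t with
  | zero => omega
  | succ k ih =>
    intro _
    rcases Nat.eq_zero_or_pos k with rfl | hk
    · norm_num
    · have := ih hk
      have : 5 ^ k ≤ 5 ^ (k+1) := Nat.pow_le_pow_right (by norm_num) (by omega)
      omega

lemma fact_le_three (hp : p.Prime) (h5 : 5 ≤ p) (m : ℕ) (hm : 3 ≤ m) :
    m.factorization p ≤ m - 3 := by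
  set t := m.factorization p with htdef
  rcases Nat.eq_zero_or_pos t with h0 | hpos
  · omega
  have hdvd : p ^ t ∣ m := Nat.ordProj_dvd m p
  have hle : p ^ t ≤ m := Nat.le_of_dvd (by omega) hdvd
  have h51 : 5 ^ t ≤ p ^ t := Nat.pow_le_pow_left h5 _
  have := five_pow_aux t hpos
  omega

lemma choose_id {n i : ℕ} (hi : i ≤ n) :
    (n + 1 - i) * (n + 1).choose i = (n + 1) * n.choose i := by
  have h1 := Nat.add_one_mul_choose_eq n (n - i)
  rw [Nat.choose_symm hi] at h1
  have h2 : n - i + 1 = n + 1 - i := by omega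
  have h3 : (n+1).choose (n + 1 - i) = (n+1).choose i := Nat.choose_symm (by omega)
  rw [h2, h3] at h1
  rw [mul_comm]
  exact h1.symm

lemma faulhaber_split (hp : p.Prime) (n : ℕ) :
    (p:ℚ) * bernoulli n = (∑ k ∈ range p, (k:ℚ)^n)
      - ∑ i ∈ range n, bernoulli i * ((n+1).choose i : ℕ) * (p:ℚ)^(n+1-i) / ((n:ℚ)+1) := by
  have H := sum_range_pow p n
  rw [Finset.sum_range_succ] at H
  have hn0 : ((n:ℚ)+1) ≠ 0 := by positivity
  have hl : bernoulli n * ((n+1).choose n : ℕ) * (p:ℚ)^(n+1-n) / ((n:ℚ)+1)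
      = (p:ℚ) * bernoulli n := by
    rw [Nat.choose_succ_self_right]
    have h1 : n + 1 - n = 1 := by omega
    rw [h1, pow_one]
    push_cast
    field_simp
  rw [hl] at H
  linarith [H]

lemma term_eq {n i : ℕ} (hi : i < n) {y : ℚ} (j : ℕ)
    (hy : (p:ℚ)^(n+1-i) / ((n+1-i : ℕ):ℚ) = (p:ℚ)^j * y) :
    bernoulli i * ((n+1).choose i : ℕ) * (p:ℚ)^(n+1-i) / ((n:ℚ)+1)
      = (p:ℚ)^j * (bernoulli i * (n.choose i : ℕ) * y) := by
  have hm0 : ((n+1-i : ℕ):ℚ) ≠ 0 := Nat.cast_ne_zero.mpr (by omega)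
  have hn0 : ((n:ℚ)+1) ≠ 0 := by positivity
  have hidq : ((n+1-i : ℕ):ℚ) * ((n+1).choose i : ℕ) = ((n:ℚ)+1) * (n.choose i : ℕ) := by
    have := choose_id (le_of_lt hi)
    push_cast [Nat.succ_sub (by omega : i ≤ n)] at this ⊢
    · exact_mod_cast this
  have step1 : bernoulli i * ((n+1).choose i : ℕ) * (p:ℚ)^(n+1-i) / ((n:ℚ)+1)
      = bernoulli i * (n.choose i : ℕ) * ((p:ℚ)^(n+1-i) / ((n+1-i : ℕ):ℚ)) := by
    field_simp
    linear_combination (bernoulli i * (p:ℚ)^(n+1-i)) * hidq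
  rw [step1, hy]
  ring

lemma pint_pow_nat (hp : p.Prime) (k n : ℕ) : PInt p ((k:ℚ)^n) := by
  have := pint_intCast (p := p) ((k:ℤ)^n) hp.ne_one
  convert this using 1
  push_cast
  ring

lemma pbern (hp : p.Prime) : ∀ n, PInt p ((p:ℚ) * bernoulli n) := by
  intro n
  induction n using Nat.strong_induction_on with
  | _ n ih =>
    rw [faulhaber_split hp n]
    apply pint_sub hp
    · exact pint_sum hp fun k _ => pint_pow_nat hp k n
    · apply pint_sum hp
      intro i hi
      rw [Finset.mem_range] at hi
      obtain ⟨y, hy, hEq⟩ := ppow_div_m hp (n+1-i) 1 (by omega) (by omega)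
        (fact_le_one _ (by omega))
      rw [term_eq hi 1 hEq, pow_one]
      have : (p:ℚ) * (bernoulli i * (n.choose i : ℕ) * y)
          = ((p:ℚ) * bernoulli i) * (n.choose i : ℕ) * y := by ring
      rw [this]
      have hc : PInt p ((n.choose i : ℕ) : ℚ) := by
        have := pint_intCast (p := p) ((n.choose i : ℤ)) hp.ne_one
        exact_mod_cast this
      exact pint_mul hp (pint_mul hp (ih i hi) hc) hy

lemma key_lemma (hp : p.Prime) (h5 : 5 ≤ p) (n : ℕ) (hev : Even n) (h4 : 4 ≤ n) :
    ∃ x : ℚ, PInt p x ∧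
      (∑ k ∈ range p, (k:ℚ)^n) - (p:ℚ) * bernoulli n = (p:ℚ)^2 * x := by
  have hsplit := faulhaber_split hp n
  have hterm : ∀ i : ℕ, ∃ y : ℚ, PInt p y ∧ (i ∈ range n →
      bernoulli i * ((n+1).choose i : ℕ) * (p:ℚ)^(n+1-i) / ((n:ℚ)+1) = (p:ℚ)^2 * y) := by
    intro i
    by_cases hi : i ∈ range n
    · rw [Finset.mem_range] at hi
      by_cases hlast : i = n - 1
      · refine ⟨0, by simpa using pint_intCast (p := p) 0 hp.ne_one, fun _ => ?_⟩
        have hodd : Odd i := by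
          subst hlast
          rcases hev with ⟨r, hr⟩
          exact ⟨r - 1, by omega⟩
        have hb : bernoulli i = 0 := by
          rw [bernoulli_eq_bernoulli'_of_ne_one (by omega)]
          exact bernoulli'_eq_zero_of_odd hodd (by omega)
        simp [hb]
      · obtain ⟨y, hy, hEq⟩ := ppow_div_m hp (n+1-i) 3 (by omega) (by omega)
          (fact_le_three hp h5 _ (by omega))
        refine ⟨(p:ℚ) * (bernoulli i * (n.choose i : ℕ) * y), ?_, fun _ => ?_⟩
        · have hc : PInt p ((n.choose i : ℕ) : ℚ) := by
            have := pint_intCast (p := p) ((n.choose i : ℤ)) hp.ne_one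
            exact_mod_cast this
          have : (p:ℚ) * (bernoulli i * (n.choose i : ℕ) * y)
              = ((p:ℚ) * bernoulli i) * ((n.choose i : ℕ) * y) := by ring
          rw [this]
          exact pint_mul hp (pbern hp i) (pint_mul hp hc hy)
        · rw [term_eq hi 3 hEq]
          ring
    · exact ⟨0, by simpa using pint_intCast (p := p) 0 hp.ne_one, fun h => absurd h hi⟩
  choose g hg1 hg2 using hterm
  refine ⟨∑ i ∈ range n, g i, pint_sum hp fun i _ => hg1 i, ?_⟩
  have : ∑ i ∈ range n, bernoulli i * ((n+1).choose i : ℕ) * (p:ℚ)^(n+1-i) / ((n:ℚ)+1)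
      = ∑ i ∈ range n, (p:ℚ)^2 * g i := Finset.sum_congr rfl fun i hi => hg2 i hi
  rw [← Finset.mul_sum] at this
  linarith [hsplit, this]

lemma prod_one_add_mul (p : ℕ) (s : Finset ℕ) (f : ℕ → ℤ) :
    ∃ k : ℤ, (∏ i ∈ s, (1 + (p:ℤ) * f i)) = 1 + (p:ℤ) * ∑ i ∈ s, f i + (p:ℤ)^2 * k := by
  classical
  induction s using Finset.induction_on with
  | empty => exact ⟨0, by simp⟩
  | @insert a s hns ih =>
    obtain ⟨k, hk⟩ := ih
    refine ⟨k + f a * ∑ i ∈ s, f i + (p:ℤ) * f a * k, ?_⟩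
    rw [Finset.prod_insert hns, Finset.sum_insert hns, hk]
    ring

lemma wilson_dvd (hp : p.Prime) : (p:ℤ) ∣ ((p-1).factorial : ℤ) + 1 := by
  haveI : Fact p.Prime := ⟨hp⟩
  have := ZMod.wilsons_lemma p
  have h : (((p-1).factorial : ℤ) + 1 : ZMod p) = 0 := by
    push_cast [this]
    ring
  exact (ZMod.intCast_zmod_eq_zero_iff_dvd _ p).mp (by exact_mod_cast h)

lemma int_part (hp : p.Prime) (hodd : Odd p) (hw : IsWilsonPrime p) :
    ∃ z : ℤ, (∑ k ∈ range p, ((k:ℤ)^(2*p-2) - (k:ℤ)^(p-1))) = (p:ℤ)^2 * z := by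
  haveI : Fact p.Prime := ⟨hp⟩
  have hp2 : 2 ≤ p := hp.two_le
  have hp0 : (p:ℤ) ≠ 0 := by exact_mod_cast hp.pos.ne'
  -- Fermat quotient exactness
  have hq : ∀ a : ℕ, a ∈ range (p-1) →
      ((a+1 : ℕ):ℤ)^(p-1) = 1 + (p:ℤ) * fermatQuotient p (a+1) := by
    intro a ha
    rw [Finset.mem_range] at ha
    have hnd : ¬ p ∣ (a+1) := by
      intro h
      have := Nat.le_of_dvd (by omega) h
      omega
    have hne : ((a+1 : ℕ) : ZMod p) ≠ 0 := by
      rw [Ne, ZMod.natCast_eq_zero_iff]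
      exact hnd
    have hferm : ((a+1 : ℕ) : ZMod p)^(p-1) = 1 := ZMod.pow_card_sub_one_eq_one hne
    have hdvd : (p:ℤ) ∣ ((a+1:ℕ):ℤ)^(p-1) - 1 := by
      rw [← ZMod.intCast_zmod_eq_zero_iff_dvd]
      push_cast at hferm ⊢
      rw [hferm]
      ring
    unfold fermatQuotient
    rw [Int.mul_ediv_cancel' hdvd]
    ring
  -- the sum over 1..p-1
  have hsum : (∑ k ∈ range p, ((k:ℤ)^(2*p-2) - (k:ℤ)^(p-1)))
      = ∑ a ∈ range (p-1), (((a+1:ℕ):ℤ)^(2*p-2) - ((a+1:ℕ):ℤ)^(p-1)) := by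
    have hpe : p = (p-1) + 1 := by omega
    rw [hpe, Finset.sum_range_succ']
    have h0 : ((0:ℕ):ℤ)^(2*((p-1)+1)-2) - ((0:ℕ):ℤ)^((p-1)+1-1) = 0 := by
      have h1 : 2*((p-1)+1)-2 ≠ 0 := by omega
      have h2 : (p-1)+1-1 ≠ 0 := by omega
      rw [Nat.cast_zero, zero_pow h1, zero_pow h2]
      ring
    rw [h0, add_zero]
    apply Finset.sum_congr rfl
    intro a ha
    have e1 : 2*((p-1)+1)-2 = 2*p-2 := by omega
    have e2 : (p-1)+1-1 = p-1 := by omega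
    simp only [e1, e2]
  -- rewrite each term with Fermat quotients
  have hterm : ∀ a ∈ range (p-1),
      ((a+1:ℕ):ℤ)^(2*p-2) - ((a+1:ℕ):ℤ)^(p-1)
        = (p:ℤ) * fermatQuotient p (a+1) + (p:ℤ)^2 * (fermatQuotient p (a+1))^2 := by
    intro a ha
    have h2 : (2*p-2) = 2*(p-1) := by omega
    rw [h2, pow_mul', hq a ha]
    ring
  -- Wilson prime: (p-1)! ≡ -1 mod p²
  obtain ⟨v, hv⟩ := hw
  have hwq : (p:ℤ) * wilsonQuotient p = ((p-1).factorial : ℤ) + 1 :=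
    Int.mul_ediv_cancel' (wilson_dvd hp)
  have hfact : ((p-1).factorial : ℤ) = (p:ℤ)^2 * v - 1 := by
    rw [hv] at hwq
    linarith [hwq]
  -- product of a^(p-1) over a = 1..p-1
  have hprodpow : (∏ a ∈ range (p-1), ((a+1:ℕ):ℤ)^(p-1)) = ((p-1).factorial : ℤ)^(p-1) := by
    have hn : (∏ x ∈ range (p-1), (x+1)) = (p-1).factorial :=
      Finset.prod_range_add_one_eq_factorial _
    calc ∏ a ∈ range (p-1), ((a+1:ℕ):ℤ)^(p-1)
        = (∏ a ∈ range (p-1), ((a+1:ℕ):ℤ))^(p-1) := by rw [Finset.prod_pow]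
      _ = ((p-1).factorial : ℤ)^(p-1) := by
          rw [← Nat.cast_prod, hn]
  obtain ⟨k, hk⟩ := prod_one_add_mul p (range (p-1)) (fun a => fermatQuotient p (a+1))
  have hprod2 : (∏ a ∈ range (p-1), ((a+1:ℕ):ℤ)^(p-1))
      = ∏ a ∈ range (p-1), (1 + (p:ℤ) * fermatQuotient p (a+1)) :=
    Finset.prod_congr rfl fun a ha => by rw [hq a ha]
  -- ((p-1)!)^(p-1) ≡ 1 mod p²
  have hfpow : ∃ w : ℤ, ((p-1).factorial : ℤ)^(p-1) = 1 + (p:ℤ)^2 * w := by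
    have h1 : ((p-1).factorial : ℤ) ≡ -1 [ZMOD (p:ℤ)^2] := by
      rw [Int.modEq_iff_dvd, hfact]
      exact ⟨-v, by ring⟩
    have h2 := h1.pow (p-1)
    have hev : Even (p-1) := by
      obtain ⟨r, hr⟩ := hodd
      exact ⟨r, by omega⟩
    rw [hev.neg_one_pow] at h2
    obtain ⟨w, hw2⟩ := (Int.modEq_iff_dvd.mp h2)
    exact ⟨-w, by linear_combination -hw2⟩
  obtain ⟨w, hwpow⟩ := hfpow
  -- conclude p ∣ Q
  have hQ : (p:ℤ) ∣ ∑ a ∈ range (p-1), fermatQuotient p (a+1) := by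
    have h1 : 1 + (p:ℤ) * ∑ a ∈ range (p-1), fermatQuotient p (a+1) + (p:ℤ)^2 * k
        = 1 + (p:ℤ)^2 * w := by
      rw [← hk, ← hprod2, hprodpow, hwpow]
    have h2 : (p:ℤ) * ∑ a ∈ range (p-1), fermatQuotient p (a+1) = (p:ℤ)^2 * (w - k) := by
      linarith [h1]
    have h3 : (p:ℤ) * ∑ a ∈ range (p-1), fermatQuotient p (a+1)
        = (p:ℤ) * ((p:ℤ) * (w - k)) := by rw [h2]; ring
    exact ⟨w - k, mul_left_cancel₀ hp0 h3⟩
  obtain ⟨Q', hQ'⟩ := hQ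
  refine ⟨Q' + ∑ a ∈ range (p-1), (fermatQuotient p (a+1))^2, ?_⟩
  rw [hsum, Finset.sum_congr rfl hterm, Finset.sum_add_distrib, ← Finset.mul_sum, ← Finset.mul_sum,
    hQ']
  ring


theorem stmt_5 (p : ℕ) (hp : p.Prime) (hodd : Odd p) (hw : IsWilsonPrime p) :
    ratCongr p 1 (bernoulli (2 * p - 2)) (bernoulli (p - 1)) := by
  rcases Nat.lt_or_ge p 5 with h5 | h5
  · exfalso
    have h2 : p ≠ 2 := by rintro rfl; have := Nat.odd_iff.mp hodd; omega
    have h4 : p ≠ 4 := by rintro rfl; norm_num at hp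
    have h3 : p = 3 := by have := hp.two_le; omega
    subst h3
    have hq3 : wilsonQuotient 3 = 1 := by decide
    rw [IsWilsonPrime, hq3] at hw
    norm_num at hw
  · have hev1 : Even (p-1) := by obtain ⟨r, hr⟩ := hodd; exact ⟨r, by omega⟩
    have hev2 : Even (2*p-2) := ⟨p-1, by omega⟩
    obtain ⟨x1, hx1, he1⟩ := key_lemma hp h5 (p-1) hev1 (by omega)
    obtain ⟨x2, hx2, he2⟩ := key_lemma hp h5 (2*p-2) hev2 (by omega)
    obtain ⟨z, hz⟩ := int_part hp hodd hw
    have hp0 : (p:ℚ) ≠ 0 := by exact_mod_cast hp.pos.ne'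
    have hzq : (∑ k ∈ range p, (k:ℚ)^(2*p-2)) - (∑ k ∈ range p, (k:ℚ)^(p-1))
        = (p:ℚ)^2 * (z:ℚ) := by
      have hc := congrArg (Int.cast : ℤ → ℚ) hz
      push_cast at hc
      rw [← Finset.sum_sub_distrib]
      exact hc
    have hPInt : PInt p (x1 - x2 + (z:ℚ)) :=
      pint_add hp (pint_sub hp hx1 hx2) (pint_intCast z hp.ne_one)
    obtain ⟨c, d, hd, hcd⟩ := hPInt
    refine ⟨c, d, hd, ?_⟩
    rw [pow_one, ← hcd]
    have hmain : (p:ℚ) * (bernoulli (2*p-2) - bernoulli (p-1))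
        = (p:ℚ) * ((x1 - x2 + (z:ℚ)) * (p:ℚ)) := by
      linear_combination he1 - he2 + hzq
    have := mul_left_cancel₀ hp0 hmain
    rw [this]
    ring
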